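/- The family of functions {t ↦ e^{ζ t² + z t} : (ζ, z) ∈ ℂ²}, viewed as functions from ℝ to ℂ, is linearly independent over ℂ. -/

import Mathlib

open Polynomial
open Polynomial

lemma step_ne_zero (a b : ℂ) (hab : a ≠ 0 ∨ b ≠ 0) (q : ℂ[X]) (hq : q ≠ 0) :
    derivative q + (C a * X + C b) * q ≠ 0 := by
  by_cases ha : a = 0
  · subst ha
    have hb : b ≠ 0 := hab.resolve_left (fun h => h rfl)
    by_cases hd : q.natDegree = 0
    · have hder : derivative q = 0 := by
        obtain ⟨c, rfl⟩ := natDegree_eq_zero.1 hd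
        simp
      simp only [hder, zero_add, map_zero, zero_mul]
      intro h
      rcases mul_eq_zero.1 h with h | h
      · exact hb (by simpa using congrArg (fun r => coeff r 0) h)
      · exact hq h
    · intro h0
      have hc := congrArg (fun r => coeff r q.natDegree) h0
      simp only [coeff_add, coeff_zero] at hc
      have hder : (derivative q).coeff q.natDegree = 0 :=
        coeff_eq_zero_of_natDegree_lt (natDegree_derivative_lt hd)
      have : ((C (0:ℂ) * X + C b) * q).coeff q.natDegree = b * q.coeff q.natDegree := by
        simp [mul_comm]
      rw [hder, this, zero_add] at hc
      exact hq (leadingCoeff_eq_zero.1 (by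
        rcases mul_eq_zero.1 hc with h | h
        · exact absurd h hb
        · exact h))
  · intro h0
    have heq : derivative q = -((C a * X + C b) * q) := by linear_combination h0
    have hlin : (C a * X + C b) ≠ 0 := by
      intro h; apply ha
      simpa using congrArg (fun r => coeff r 1) h
    have h2 : ((C a * X + C b) * q).natDegree = 1 + q.natDegree := by
      rw [natDegree_mul hlin hq, natDegree_linear ha]
    have h3 : (derivative q).natDegree ≤ q.natDegree :=
      le_trans (natDegree_derivative_le q) (Nat.sub_le _ _)
    rw [heq, natDegree_neg, h2] at h3
    omega
open Polynomial

noncomputable def expStep (n q : ℂ × ℂ) (r : ℂ[X]) : ℂ[X] :=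
  derivative r + (C (2 * (q.1 - n.1)) * X + C (q.2 - n.2)) * r

lemma hasDerivAt_term (p : ℂ[X]) (ζ z : ℂ) (t : ℝ) :
    HasDerivAt (fun t : ℝ => p.eval (t : ℂ) * Complex.exp (ζ * (t:ℂ) ^ 2 + z * t))
      ((p.derivative.eval (t:ℂ) + (2*ζ*t + z) * p.eval (t:ℂ)) * Complex.exp (ζ * (t:ℂ)^2 + z * t)) t := by
  have h1 : HasDerivAt (fun t : ℝ => p.eval (t : ℂ)) (p.derivative.eval (t:ℂ)) t :=
    (p.hasDerivAt (t:ℂ)).comp_ofReal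
  have h2 : HasDerivAt (fun w : ℂ => ζ * w ^ 2 + z * w) (2*ζ*(t:ℂ) + z) (t:ℂ) := by
    have := ((hasDerivAt_pow 2 (t:ℂ)).const_mul ζ).add ((hasDerivAt_id (t:ℂ)).const_mul z)
    refine this.congr_deriv ?_
    ring
  have h3 := (h2.comp_ofReal).cexp
  refine (h1.mul h3).congr_deriv ?_
  ring

lemma step_sum (s : Finset (ℂ × ℂ)) (n : ℂ × ℂ) (P : ℂ × ℂ → ℂ[X])
    (h : ∀ t : ℝ, ∑ q ∈ s, (P q).eval (t:ℂ) * Complex.exp (q.1 * (t:ℂ)^2 + q.2 * t) = 0) :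
    ∀ t : ℝ, ∑ q ∈ s, (expStep n q (P q)).eval (t:ℂ) * Complex.exp (q.1 * (t:ℂ)^2 + q.2 * t) = 0 := by
  intro t
  have hF : HasDerivAt (fun t : ℝ => ∑ q ∈ s, (P q).eval (t:ℂ) * Complex.exp (q.1 * (t:ℂ)^2 + q.2 * t))
      (∑ q ∈ s, ((P q).derivative.eval (t:ℂ) + (2*q.1*t + q.2) * (P q).eval (t:ℂ)) *
        Complex.exp (q.1 * (t:ℂ)^2 + q.2 * t)) t :=
    HasDerivAt.fun_sum fun q _ => hasDerivAt_term (P q) q.1 q.2 t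
  have hzero : (fun t : ℝ => ∑ q ∈ s, (P q).eval (t:ℂ) * Complex.exp (q.1 * (t:ℂ)^2 + q.2 * t))
      = fun _ => (0:ℂ) := funext h
  rw [hzero] at hF
  have hD : ∑ q ∈ s, ((P q).derivative.eval (t:ℂ) + (2*q.1*t + q.2) * (P q).eval (t:ℂ)) *
      Complex.exp (q.1 * (t:ℂ)^2 + q.2 * t) = 0 := hF.unique (hasDerivAt_const t 0)
  calc ∑ q ∈ s, (expStep n q (P q)).eval (t:ℂ) * Complex.exp (q.1 * (t:ℂ)^2 + q.2 * t)
      = ∑ q ∈ s, (((P q).derivative.eval (t:ℂ) + (2*q.1*t + q.2) * (P q).eval (t:ℂ)) *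
          Complex.exp (q.1 * (t:ℂ)^2 + q.2 * t)
          - (2*n.1*t + n.2) * ((P q).eval (t:ℂ) * Complex.exp (q.1 * (t:ℂ)^2 + q.2 * t))) := by
        refine Finset.sum_congr rfl fun q _ => ?_
        simp only [expStep, eval_add, eval_mul, eval_C, eval_X, Polynomial.eval_mul]
        ring
    _ = 0 := by
        rw [Finset.sum_sub_distrib, hD, ← Finset.mul_sum, h t, mul_zero, sub_zero]

lemma main_induction (s : Finset (ℂ × ℂ)) :
    ∀ (P : ℂ × ℂ → ℂ[X]),
      (∀ t : ℝ, ∑ q ∈ s, (P q).eval (t:ℂ) * Complex.exp (q.1 * (t:ℂ)^2 + q.2 * t) = 0) →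
      ∀ p ∈ s, P p = 0 := by
  induction s using Finset.strongInduction with
  | _ s ih =>
    intro P h p hp
    set d := (P p).natDegree + 1 with hd
    have key : ∀ k : ℕ, ∀ t : ℝ,
        ∑ q ∈ s, ((expStep p q)^[k] (P q)).eval (t:ℂ) * Complex.exp (q.1 * (t:ℂ)^2 + q.2 * t) = 0 := by
      intro k
      induction k with
      | zero => simpa using h
      | succ k ihk =>
        intro t
        have h2 := step_sum s p (fun q => (expStep p q)^[k] (P q)) ihk t
        simpa [Function.iterate_succ_apply'] using h2
    have hstep_p : expStep p p = fun r => derivative r := by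
      funext r
      simp [expStep]
    have hQp : (expStep p p)^[d] (P p) = 0 := by
      rw [hstep_p]
      exact iterate_derivative_eq_zero (by omega)
    have hsum' : ∀ t : ℝ,
        ∑ q ∈ s.erase p, ((expStep p q)^[d] (P q)).eval (t:ℂ) * Complex.exp (q.1 * (t:ℂ)^2 + q.2 * t) = 0 := by
      intro t
      have hk := key d t
      rw [← Finset.add_sum_erase s _ hp, hQp] at hk
      simpa using hk
    have hQ0 : ∀ q ∈ s.erase p, (expStep p q)^[d] (P q) = 0 :=
      ih (s.erase p) (Finset.erase_ssubset hp) _ hsum'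
    have hP0 : ∀ q ∈ s.erase p, P q = 0 := by
      intro q hq
      by_contra hPq
      have hqp : q ≠ p := Finset.ne_of_mem_erase hq
      have hab : (2 * (q.1 - p.1) : ℂ) ≠ 0 ∨ (q.2 - p.2 : ℂ) ≠ 0 := by
        by_contra hc
        push_neg at hc
        apply hqp
        have h1 : q.1 = p.1 := by
          have := (mul_eq_zero.1 hc.1).resolve_left two_ne_zero
          exact sub_eq_zero.1 this
        have h2 : q.2 = p.2 := sub_eq_zero.1 hc.2
        exact Prod.ext h1 h2
      have hne : ∀ k : ℕ, (expStep p q)^[k] (P q) ≠ 0 := by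
        intro k
        induction k with
        | zero => simpa using hPq
        | succ k ihk =>
          rw [Function.iterate_succ_apply']
          exact step_ne_zero _ _ hab _ ihk
      exact hne d (hQ0 q hq)
    have hevalp : ∀ t : ℝ, (P p).eval (t:ℂ) = 0 := by
      intro t
      have hk := h t
      rw [← Finset.add_sum_erase s _ hp] at hk
      rw [Finset.sum_eq_zero (fun q hq => by rw [hP0 q hq]; simp)] at hk
      simpa using hk
    have hinf : {x : ℂ | (P p).IsRoot x}.Infinite := by
      apply Set.Infinite.mono (s := Set.range (Complex.ofReal))
      · rintro _ ⟨t, rfl⟩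
        exact hevalp t
      · exact Set.infinite_range_of_injective Complex.ofReal_injective
    exact eq_zero_of_infinite_isRoot _ hinf

/-- The family of functions `t ↦ exp (ζ t² + z t)` (from `ℝ` to `ℂ`), indexed by
pairs `(ζ, z) ∈ ℂ × ℂ`, is linearly independent over `ℂ`. -/
theorem exp_quadratic_linearIndependent :
    LinearIndependent ℂ
      (fun p : ℂ × ℂ => fun t : ℝ => Complex.exp (p.1 * t ^ 2 + p.2 * t)) := by
  rw [linearIndependent_iff']
  intro s g hsum i hi
  have h0 : ∀ t : ℝ, ∑ q ∈ s, (C (g q)).eval (t:ℂ) * Complex.exp (q.1 * (t:ℂ)^2 + q.2 * t) = 0 := by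
    intro t
    have := congrFun hsum t
    simpa [Finset.sum_apply, Pi.smul_apply, smul_eq_mul] using this
  have := main_induction s (fun q => C (g q)) h0 i hi
  exact C_eq_zero.1 this
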